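/- Let G be a group and A an abelian group regarded as a G-module with trivial G-action. Let A[e] denote the subgroup of A[G] = G →₀ A consisting of functions supported at the identity element e of G. Then Wh₁⁺(G;A), defined as the coinvariants of the diagonal G-action on the quotient A[G]/A[e], is isomorphic as an abelian group to the direct sum of one copy of A for each nonidentity conjugacy class of G, i.e., to {c : ConjClasses G // c ≠ [e]} →₀ A. -/

import Mathlib

/-- The diagonal action of `σ : G` on `A[G] = G →₀ A` for a trivial `G`-action on `A`:
it sends `f` to `τ ↦ f (σ⁻¹ * τ * σ)`, i.e. permutes the coordinates by conjugation. -/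
noncomputable def conjHom (G : Type*) [Group G] (A : Type*) [AddCommGroup A] (σ : G) :
    (G →₀ A) →+ (G →₀ A) :=
  Finsupp.mapDomain.addMonoidHom fun x => σ * x * σ⁻¹

/-- The subgroup `A[e]` of `A[G] = G →₀ A` consisting of functions supported at the
identity element of `G`. -/
def suppAtOne (G : Type*) [Group G] (A : Type*) [AddCommGroup A] :
    AddSubgroup (G →₀ A) where
  carrier := {f | (f.support : Set G) ⊆ ({1} : Set G)}
  zero_mem' := by simp
  add_mem' := by
    classical
    intro f g hf hg τ hτ
    have h : τ ∈ f.support ∪ g.support := Finsupp.support_add (Finset.mem_coe.mp hτ)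
    rcases Finset.mem_union.mp h with h' | h'
    · exact hf h'
    · exact hg h'
  neg_mem' := by
    intro f hf
    simpa using hf

/-- The diagonal `G`-action descends to the quotient `A[G]/A[e]`. -/
noncomputable def qAct (G : Type*) [Group G] (A : Type*) [AddCommGroup A] (σ : G) :
    ((G →₀ A) ⧸ suppAtOne G A) →+ ((G →₀ A) ⧸ suppAtOne G A) :=
  QuotientAddGroup.map _ _ (conjHom G A σ) (by
    classical
    intro f hf
    simp only [AddSubgroup.mem_comap]
    intro τ hτ
    have h1 : τ ∈ (Finsupp.mapDomain (fun x => σ * x * σ⁻¹) f).support :=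
      Finset.mem_coe.mp hτ
    have h2 := Finsupp.mapDomain_support h1
    rcases Finset.mem_image.mp h2 with ⟨x, hx, rfl⟩
    have : x ∈ ({1} : Set G) := hf hx
    simp only [Set.mem_singleton_iff] at this
    subst this
    simp)

/-- The subgroup of `A[G]/A[e]` generated by all `σ · x − x`, so that the quotient by it
is the group of coinvariants `Wh₁⁺(G;A)`. -/
noncomputable def whRel (G : Type*) [Group G] (A : Type*) [AddCommGroup A] :
    AddSubgroup ((G →₀ A) ⧸ suppAtOne G A) :=
  AddSubgroup.closure
    {x | ∃ (σ : G) (q : (G →₀ A) ⧸ suppAtOne G A), x = qAct G A σ q - q}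

/-- `Wh₁⁺(G;A)`: the coinvariants of the diagonal `G`-action on `A[G]/A[e]`. -/
noncomputable abbrev Wh1Plus (G : Type*) [Group G] (A : Type*) [AddCommGroup A] :=
  ((G →₀ A) ⧸ suppAtOne G A) ⧸ whRel G A

section Aux
variable {G : Type*} [Group G] {A : Type*} [AddCommGroup A]

/-- The map `A[G] → ⊕_{c ≠ [1]} A` collecting coefficients along conjugacy classes. -/
noncomputable def phi (G : Type*) [Group G] (A : Type*) [AddCommGroup A] :
    (G →₀ A) →+ ({c : ConjClasses G // c ≠ ConjClasses.mk (1 : G)} →₀ A) :=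
  (Finsupp.subtypeDomainAddMonoidHom).comp (Finsupp.mapDomain.addMonoidHom ConjClasses.mk)

lemma phi_apply (f : G →₀ A) (c) : phi G A f c = Finsupp.mapDomain ConjClasses.mk f c.1 := rfl

lemma conjHom_apply (σ : G) (f : G →₀ A) :
    conjHom G A σ f = Finsupp.mapDomain (fun x => σ * x * σ⁻¹) f := rfl

lemma mk_out' (c : ConjClasses G) : ConjClasses.mk c.out = c := by
  rw [← ConjClasses.quotient_mk_eq_mk]; exact Quotient.out_eq c

lemma out_one : (ConjClasses.mk (1 : G)).out = 1 := by
  have := mk_out' (ConjClasses.mk (1 : G))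
  rw [ConjClasses.mk_eq_mk_iff_isConj, isConj_one_left] at this
  exact this

lemma phi_single (g : G) (a : A) (h : ConjClasses.mk g ≠ ConjClasses.mk (1 : G)) :
    phi G A (Finsupp.single g a) = Finsupp.single ⟨ConjClasses.mk g, h⟩ a := by
  classical
  ext c
  rw [phi_apply]
  rw [Finsupp.mapDomain_single, Finsupp.single_apply, Finsupp.single_apply]
  simp [Subtype.ext_iff]

lemma phi_surjective : Function.Surjective (phi G A) := by
  classical
  intro x
  induction x using Finsupp.induction with
  | zero => exact ⟨0, map_zero _⟩
  | single_add c a x _ _ ih =>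
    obtain ⟨f, hf⟩ := ih
    refine ⟨Finsupp.single c.1.out a + f, ?_⟩
    rw [map_add, hf, phi_single c.1.out a (by rw [mk_out']; exact c.2)]
    congr 1
    ext
    simp [mk_out']

lemma phi_conjHom (σ : G) (f : G →₀ A) : phi G A (conjHom G A σ f) = phi G A f := by
  classical
  ext c
  rw [phi_apply, phi_apply, conjHom_apply, ← Finsupp.mapDomain_comp]
  congr 2
  funext x
  show ConjClasses.mk (σ * x * σ⁻¹) = ConjClasses.mk x
  rw [ConjClasses.mk_eq_mk_iff_isConj]
  exact (isConj_iff.mpr ⟨σ, rfl⟩).symm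

/-- The relation subgroup at the level of `A[G]`. -/
noncomputable def Mrel (G : Type*) [Group G] (A : Type*) [AddCommGroup A] :
    AddSubgroup (G →₀ A) :=
  AddSubgroup.closure {x | ∃ (σ : G) (f : G →₀ A), x = conjHom G A σ f - f}

lemma sub_mem_Mrel (f : G →₀ A) :
    f - Finsupp.mapDomain (fun g => (ConjClasses.mk g).out) f ∈ Mrel G A := by
  classical
  induction f using Finsupp.induction with
  | zero => simpa using (Mrel G A).zero_mem
  | single_add g a f _ _ ih =>
    rw [Finsupp.mapDomain_add, Finsupp.mapDomain_single]
    have hc : IsConj g (ConjClasses.mk g).out :=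
      ConjClasses.mk_eq_mk_iff_isConj.mp (mk_out' (ConjClasses.mk g)).symm
    obtain ⟨σ, hσ⟩ := isConj_iff.mp hc
    have h1 : conjHom G A σ (Finsupp.single g a)
        = Finsupp.single (ConjClasses.mk g).out a := by
      rw [conjHom_apply, Finsupp.mapDomain_single, hσ]
    have key : Finsupp.single g a - Finsupp.single (ConjClasses.mk g).out a ∈ Mrel G A := by
      have h3 : Finsupp.single g a - Finsupp.single (ConjClasses.mk g).out a
          = -(conjHom G A σ (Finsupp.single g a) - Finsupp.single g a) := by
        rw [h1]; abel
      rw [h3]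
      exact (Mrel G A).neg_mem
        (AddSubgroup.subset_closure ⟨σ, Finsupp.single g a, rfl⟩)
    have heq : Finsupp.single g a + f -
        (Finsupp.single (ConjClasses.mk g).out a
          + Finsupp.mapDomain (fun g => (ConjClasses.mk g).out) f)
        = (Finsupp.single g a - Finsupp.single (ConjClasses.mk g).out a)
          + (f - Finsupp.mapDomain (fun g => (ConjClasses.mk g).out) f) := by abel
    rw [heq]
    exact (Mrel G A).add_mem key ih

lemma mapd_mem_suppAtOne (f : G →₀ A) (hf : phi G A f = 0) :
    Finsupp.mapDomain (fun g => (ConjClasses.mk g).out) f ∈ suppAtOne G A := by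
  classical
  have hF : (Finsupp.mapDomain ConjClasses.mk f).support ⊆ {ConjClasses.mk (1 : G)} := by
    intro c hc
    rw [Finset.mem_singleton]
    by_contra hne
    have h0 : phi G A f ⟨c, hne⟩ = 0 := by rw [hf]; rfl
    rw [phi_apply] at h0
    exact (Finsupp.mem_support_iff.mp hc) h0
  have hFeq := Finsupp.support_subset_singleton.mp hF
  have : Finsupp.mapDomain (fun g => (ConjClasses.mk g).out) f
      = Finsupp.single (1 : G)
          ((Finsupp.mapDomain ConjClasses.mk f) (ConjClasses.mk (1 : G))) := by
    have hcomp : Finsupp.mapDomain (fun g => (ConjClasses.mk g).out) f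
        = Finsupp.mapDomain (fun c : ConjClasses G => c.out)
            (Finsupp.mapDomain ConjClasses.mk f) :=
      Finsupp.mapDomain_comp
    rw [hcomp, hFeq, Finsupp.mapDomain_single, out_one]
    simp
  intro τ hτ
  rw [this] at hτ
  have := Finsupp.support_single_subset (Finset.mem_coe.mp hτ)
  simpa using this

lemma suppAtOne_le_ker : suppAtOne G A ≤ (phi G A).ker := by
  classical
  intro f hf
  rw [AddMonoidHom.mem_ker]
  have hf' : f.support ⊆ {1} := by
    intro x hx
    have := hf (Finset.mem_coe.mpr hx)
    simpa using this
  have hfeq := Finsupp.support_subset_singleton.mp hf'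
  ext c
  rw [phi_apply, hfeq, Finsupp.mapDomain_single, Finsupp.single_apply]
  simp [Ne.symm c.2]

lemma whRel_eq :
    whRel G A = AddSubgroup.map (QuotientAddGroup.mk' (suppAtOne G A)) (phi G A).ker := by
  apply le_antisymm
  · refine (AddSubgroup.closure_le _).mpr ?_
    rintro x ⟨σ, q, rfl⟩
    obtain ⟨f, rfl⟩ := QuotientAddGroup.mk'_surjective (suppAtOne G A) q
    refine ⟨conjHom G A σ f - f, ?_, ?_⟩
    · show phi G A _ = 0
      rw [map_sub, phi_conjHom, sub_self]
    · rw [map_sub]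
      congr 1
  · rintro _ ⟨f, hf, rfl⟩
    replace hf : phi G A f = 0 := hf
    have h1 := sub_mem_Mrel (G := G) (A := A) f
    have h2 := mapd_mem_suppAtOne f hf
    have hd : QuotientAddGroup.mk' (suppAtOne G A)
        (Finsupp.mapDomain (fun g => (ConjClasses.mk g).out) f) = 0 :=
      (QuotientAddGroup.eq_zero_iff _).mpr h2
    have hmk : QuotientAddGroup.mk' (suppAtOne G A) f
        = QuotientAddGroup.mk' (suppAtOne G A)
            (f - Finsupp.mapDomain (fun g => (ConjClasses.mk g).out) f) := by
      rw [map_sub, hd, sub_zero]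
    rw [hmk]
    have hmap : AddSubgroup.map (QuotientAddGroup.mk' (suppAtOne G A)) (Mrel G A)
        ≤ whRel G A := by
      rw [Mrel, AddMonoidHom.map_closure]
      refine (AddSubgroup.closure_le _).mpr ?_
      rintro _ ⟨_, ⟨σ, g, rfl⟩, rfl⟩
      apply AddSubgroup.subset_closure
      refine ⟨σ, QuotientAddGroup.mk' (suppAtOne G A) g, ?_⟩
      rw [map_sub]
      congr 1
    exact hmap ⟨_, h1, rfl⟩

end Aux

/-- `Wh₁⁺(G;A)` (with trivial `G`-action on `A`) is isomorphic to the direct sum of one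
copy of `A` for each nonidentity conjugacy class of `G`. -/
theorem stmt2 {G : Type*} [Group G] {A : Type*} [AddCommGroup A] :
    Nonempty (Wh1Plus G A ≃+
      ({c : ConjClasses G // c ≠ ConjClasses.mk (1 : G)} →₀ A)) := by
  classical
  exact ⟨((QuotientAddGroup.quotientAddEquivOfEq whRel_eq).trans
    (QuotientAddGroup.quotientQuotientEquivQuotient (suppAtOne G A) (phi G A).ker
      suppAtOne_le_ker)).trans
    (QuotientAddGroup.quotientKerEquivOfSurjective _ phi_surjective)⟩
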